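/- Let X be a complex topological vector space and Γ ⊆ Γ' sets of continuous linear operators on X such that every S ∈ Γ' lies in the strong operator topology closure of Γ, i.e., for every finite set F ⊆ X and every neighborhood U of 0 in X there exists T ∈ Γ with S x − T x ∈ U for all x ∈ F. Then Γ and Γ' have exactly the same diskcyclic vectors: 𝔻C(Γ') = 𝔻C(Γ). In particular, Γ is diskcyclic if and only if Γ' is diskcyclic. -/

import Mathlib

/-- If every `S ∈ Γ'` lies in the strong operator topology closure of `Γ ⊆ Γ'`,
then `Γ` and `Γ'` have exactly the same diskcyclic vectors; in particular `Γ` is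
diskcyclic iff `Γ'` is diskcyclic. -/
theorem stmt_10 {X : Type*} [AddCommGroup X] [Module ℂ X] [TopologicalSpace X]
    [IsTopologicalAddGroup X] [ContinuousSMul ℂ X]
    (Γ Γ' : Set (X →L[ℂ] X)) (hsub : Γ ⊆ Γ')
    (hSOT : ∀ S ∈ Γ', ∀ F : Finset X, ∀ U ∈ nhds (0 : X),
      ∃ T ∈ Γ, ∀ x ∈ F, S x - T x ∈ U) :
    {x : X | Dense {y : X | ∃ α : ℂ, ‖α‖ ≤ 1 ∧ ∃ T ∈ Γ', y = α • T x}} =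
      {x : X | Dense {y : X | ∃ α : ℂ, ‖α‖ ≤ 1 ∧ ∃ T ∈ Γ, y = α • T x}} ∧
    ((∃ x : X, Dense {y : X | ∃ α : ℂ, ‖α‖ ≤ 1 ∧ ∃ T ∈ Γ, y = α • T x}) ↔
      ∃ x : X, Dense {y : X | ∃ α : ℂ, ‖α‖ ≤ 1 ∧ ∃ T ∈ Γ', y = α • T x}) := by
  have key : ∀ x : X,
      {y : X | ∃ α : ℂ, ‖α‖ ≤ 1 ∧ ∃ T ∈ Γ', y = α • T x} ⊆
      closure {y : X | ∃ α : ℂ, ‖α‖ ≤ 1 ∧ ∃ T ∈ Γ, y = α • T x} := by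
    rintro x y ⟨α, hα, S, hS, rfl⟩
    rw [mem_closure_iff_nhds]
    intro V hV
    have hcont : Continuous fun d : X => α • S x - α • d := continuous_const.sub (continuous_const.smul continuous_id)
    have hU : (fun d : X => α • S x - α • d) ⁻¹' V ∈ nhds (0 : X) := by
      have h := hcont.continuousAt (x := (0 : X))
      rw [ContinuousAt] at h
      simp only [smul_zero, sub_zero] at h
      exact h hV
    obtain ⟨T, hT, hTx⟩ := hSOT S hS {x} _ hU
    refine ⟨α • T x, ?_, α, hα, T, hT, rfl⟩
    have := hTx x (Finset.mem_singleton_self x)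
    simpa [smul_sub, sub_sub_cancel] using this
  have hsubset : ∀ x : X,
      {y : X | ∃ α : ℂ, ‖α‖ ≤ 1 ∧ ∃ T ∈ Γ, y = α • T x} ⊆
      {y : X | ∃ α : ℂ, ‖α‖ ≤ 1 ∧ ∃ T ∈ Γ', y = α • T x} := by
    rintro x y ⟨α, hα, T, hT, rfl⟩
    exact ⟨α, hα, T, hsub hT, rfl⟩
  have hiff : ∀ x : X, Dense {y : X | ∃ α : ℂ, ‖α‖ ≤ 1 ∧ ∃ T ∈ Γ', y = α • T x} ↔
      Dense {y : X | ∃ α : ℂ, ‖α‖ ≤ 1 ∧ ∃ T ∈ Γ, y = α • T x} := by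
    intro x
    constructor
    · intro h
      rw [dense_iff_closure_eq]
      apply Set.eq_univ_of_univ_subset
      calc (Set.univ : Set X) = closure {y : X | ∃ α : ℂ, ‖α‖ ≤ 1 ∧ ∃ T ∈ Γ', y = α • T x} :=
            (h.closure_eq).symm
        _ ⊆ closure (closure {y : X | ∃ α : ℂ, ‖α‖ ≤ 1 ∧ ∃ T ∈ Γ, y = α • T x}) :=
            closure_mono (key x)
        _ = closure {y : X | ∃ α : ℂ, ‖α‖ ≤ 1 ∧ ∃ T ∈ Γ, y = α • T x} := closure_closure
    · exact fun h => h.mono (hsubset x)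
  constructor
  · ext x
    simpa using hiff x
  · exact ⟨fun ⟨x, hx⟩ => ⟨x, (hiff x).mpr hx⟩, fun ⟨x, hx⟩ => ⟨x, (hiff x).mp hx⟩⟩
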